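/- Let f₁, f₂ : ℝ → ℝ be continuous and 1-periodic with fᵢ(k) = −fᵢ(1/2 − k) for all k, and let a₁↑, a₁↓, a₂↑, a₂↓ ∈ ℝ. For i = 1,2 define hᵢ(k) = Σ_{σ∈{↑,↓}} [ (e^{fᵢ(k) − aᵢσ} + 1)^{−1} − (e^{−fᵢ(k) − aᵢσ} + 1)^{−1} ] and εᵢσ = ∫_{−1/2}^{1/2} (e^{fᵢ(k) − aᵢσ} + 1)^{−1} dk. If h₁(k) = h₂(k) for all k ∈ ℝ, ε₁↑ = ε₂↑ and ε₁↓ = ε₂↓, then f₁ = f₂, a₁↑ = a₂↑ and a₁↓ = a₂↓. (The map from a stationary state's parameters (f, a↑, a↓) to its conserved data (h, ε↑, ε↓) is one-to-one.) -/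

import Mathlib

/-- The conserved pointwise trace difference of the stationary state with
parameters `(f, aup, adown)`. -/
noncomputable def hTraceDiff (f : ℝ → ℝ) (aup adown : ℝ) (k : ℝ) : ℝ :=
  ((Real.exp (f k - aup) + 1)⁻¹ - (Real.exp (-f k - aup) + 1)⁻¹)
    + ((Real.exp (f k - adown) + 1)⁻¹ - (Real.exp (-f k - adown) + 1)⁻¹)

/-- The conserved spin occupation of the stationary state with parameters `(f, a)`. -/
noncomputable def spinOcc (f : ℝ → ℝ) (a : ℝ) : ℝ :=
  ∫ k in (-(1/2 : ℝ))..(1/2 : ℝ), (Real.exp (f k - a) + 1)⁻¹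

/-- The Fermi function. -/
noncomputable def FF (x : ℝ) : ℝ := (Real.exp x + 1)⁻¹

lemma FF_strictAnti : StrictAnti FF := by
  intro x y h
  have h1 : (0:ℝ) < Real.exp x + 1 := by positivity
  have h2 : Real.exp x < Real.exp y := Real.exp_lt_exp.mpr h
  exact inv_strictAnti₀ h1 (by linarith)

lemma FF_cont : Continuous FF :=
  (Real.continuous_exp.add continuous_const).inv₀ (fun x => (by positivity : Real.exp x + 1 ≠ 0))

lemma qterm_nonneg (x y : ℝ) : 0 ≤ (FF y - FF x) * (x - y) := by
  rcases lt_trichotomy x y with h | h | h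
  · have := FF_strictAnti h
    have := sub_neg.mpr h
    nlinarith
  · simp [h]
  · have := FF_strictAnti h
    have := sub_pos.mpr h
    nlinarith

lemma qterm_eq_zero {x y : ℝ} (h : (FF y - FF x) * (x - y) = 0) : x = y := by
  by_contra hne
  rcases lt_or_gt_of_ne hne with hlt | hlt
  · have h1 := FF_strictAnti hlt
    have h2 := sub_neg.mpr hlt
    nlinarith
  · have h1 := FF_strictAnti hlt
    have h2 := sub_pos.mpr hlt
    nlinarith

theorem stmt_11 (f₁ f₂ : ℝ → ℝ) (hf₁ : Continuous f₁) (hf₂ : Continuous f₂)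
    (hper₁ : Function.Periodic f₁ 1) (hper₂ : Function.Periodic f₂ 1)
    (hsym₁ : ∀ k : ℝ, f₁ k = -f₁ (1/2 - k)) (hsym₂ : ∀ k : ℝ, f₂ k = -f₂ (1/2 - k))
    (a₁up a₁down a₂up a₂down : ℝ)
    (hh : ∀ k : ℝ, hTraceDiff f₁ a₁up a₁down k = hTraceDiff f₂ a₂up a₂down k)
    (hup : spinOcc f₁ a₁up = spinOcc f₂ a₂up)
    (hdown : spinOcc f₁ a₁down = spinOcc f₂ a₂down) :
    f₁ = f₂ ∧ a₁up = a₂up ∧ a₁down = a₂down := by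
  -- basic continuous functions
  set Dup : ℝ → ℝ := fun k => FF (f₂ k - a₂up) - FF (f₁ k - a₁up) with hDup
  set Ddown : ℝ → ℝ := fun k => FF (f₂ k - a₂down) - FF (f₁ k - a₁down) with hDdown
  set g : ℝ → ℝ := fun k => f₁ k - f₂ k with hg
  set Q : ℝ → ℝ := fun k =>
      (FF (f₂ k - a₂up) - FF (f₁ k - a₁up)) * ((f₁ k - a₁up) - (f₂ k - a₂up))
    + (FF (f₂ k - a₂down) - FF (f₁ k - a₁down)) * ((f₁ k - a₁down) - (f₂ k - a₂down))
    with hQ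
  have cFF1u : Continuous fun k => FF (f₁ k - a₁up) := FF_cont.comp (hf₁.sub continuous_const)
  have cFF1d : Continuous fun k => FF (f₁ k - a₁down) := FF_cont.comp (hf₁.sub continuous_const)
  have cFF2u : Continuous fun k => FF (f₂ k - a₂up) := FF_cont.comp (hf₂.sub continuous_const)
  have cFF2d : Continuous fun k => FF (f₂ k - a₂down) := FF_cont.comp (hf₂.sub continuous_const)
  have cDup : Continuous Dup := cFF2u.sub cFF1u
  have cDdown : Continuous Ddown := cFF2d.sub cFF1d
  have cg : Continuous g := hf₁.sub hf₂
  have cQ : Continuous Q := by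
    apply Continuous.add
    · exact (cFF2u.sub cFF1u).mul ((hf₁.sub continuous_const).sub (hf₂.sub continuous_const))
    · exact (cFF2d.sub cFF1d).mul ((hf₁.sub continuous_const).sub (hf₂.sub continuous_const))
  -- the spin-occupation differences integrate to zero
  have intDup : (∫ k in (-(1/2 : ℝ))..(1/2 : ℝ), Dup k) = 0 := by
    rw [intervalIntegral.integral_sub (cFF2u.intervalIntegrable _ _)
      (cFF1u.intervalIntegrable _ _)]
    have h1 : (∫ k in (-(1/2 : ℝ))..(1/2 : ℝ), FF (f₂ k - a₂up)) = spinOcc f₂ a₂up := rfl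
    have h2 : (∫ k in (-(1/2 : ℝ))..(1/2 : ℝ), FF (f₁ k - a₁up)) = spinOcc f₁ a₁up := rfl
    rw [h1, h2, hup, sub_self]
  have intDdown : (∫ k in (-(1/2 : ℝ))..(1/2 : ℝ), Ddown k) = 0 := by
    rw [intervalIntegral.integral_sub (cFF2d.intervalIntegrable _ _)
      (cFF1d.intervalIntegrable _ _)]
    have h1 : (∫ k in (-(1/2 : ℝ))..(1/2 : ℝ), FF (f₂ k - a₂down)) = spinOcc f₂ a₂down := rfl
    have h2 : (∫ k in (-(1/2 : ℝ))..(1/2 : ℝ), FF (f₁ k - a₁down)) = spinOcc f₁ a₁down := rfl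
    rw [h1, h2, hdown, sub_self]
  -- the symmetric part integrates to zero
  set GD : ℝ → ℝ := fun k => g k * (Dup k + Ddown k) with hGD
  have hsval₁ : ∀ k : ℝ, f₁ (1/2 - k) = -f₁ k := by
    intro k; have := hsym₁ k; linarith
  have hsval₂ : ∀ k : ℝ, f₂ (1/2 - k) = -f₂ k := by
    intro k; have := hsym₂ k; linarith
  have hGDsym : ∀ k : ℝ, GD (1/2 - k) = -(GD k) := by
    intro k
    have hhk := hh k
    simp only [hTraceDiff] at hhk
    have e1u : (Real.exp (f₁ k - a₁up) + 1)⁻¹ = FF (f₁ k - a₁up) := rfl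
    simp only [hGD, hg, hDup, hDdown, hsval₁, hsval₂]
    have hΔ : FF (-f₂ k - a₂up) - FF (-f₁ k - a₁up) + (FF (-f₂ k - a₂down) - FF (-f₁ k - a₁down))
        = FF (f₂ k - a₂up) - FF (f₁ k - a₁up) + (FF (f₂ k - a₂down) - FF (f₁ k - a₁down)) := by
      simp only [FF]
      linarith [hhk]
    rw [hΔ]; ring
  have hGDper : Function.Periodic GD 1 := by
    intro k
    simp only [hGD, hg, hDup, hDdown, hper₁ k, hper₂ k]
  have intGD : (∫ k in (-(1/2 : ℝ))..(1/2 : ℝ), GD k) = 0 := by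
    have e1 : (∫ x in (-(1/2 : ℝ))..(1/2 : ℝ), GD (1/2 - x))
        = ∫ x in ((1:ℝ)/2 - 1/2)..((1:ℝ)/2 - -(1/2)), GD x :=
      intervalIntegral.integral_comp_sub_left GD (1/2)
    rw [show (1:ℝ)/2 - 1/2 = 0 by norm_num, show (1:ℝ)/2 - -(1/2) = 1 by norm_num] at e1
    have e2 : (∫ x in (0:ℝ)..(0:ℝ)+1, GD x) = ∫ x in (-(1/2 : ℝ))..(-(1/2 : ℝ))+1, GD x :=
      hGDper.intervalIntegral_add_eq 0 (-(1/2 : ℝ))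
    rw [zero_add, show (-(1/2:ℝ)) + 1 = 1/2 by norm_num] at e2
    have e3 : (∫ x in (-(1/2 : ℝ))..(1/2 : ℝ), GD (1/2 - x))
        = -∫ x in (-(1/2 : ℝ))..(1/2 : ℝ), GD x := by
      rw [← intervalIntegral.integral_neg]
      apply intervalIntegral.integral_congr
      intro x _
      exact hGDsym x
    have := e3.symm.trans (e1.trans e2)
    linarith
  -- the total nonnegative integrand integrates to zero
  have hQeq : ∀ k : ℝ, Q k = GD k - (a₁up - a₂up) * Dup k - (a₁down - a₂down) * Ddown k := by
    intro k
    simp only [hQ, hGD, hg, hDup, hDdown]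
    ring
  have intQ : (∫ k in (-(1/2 : ℝ))..(1/2 : ℝ), Q k) = 0 := by
    rw [intervalIntegral.integral_congr (g := fun k =>
        GD k - (a₁up - a₂up) * Dup k - (a₁down - a₂down) * Ddown k)
        (fun x _ => hQeq x)]
    rw [intervalIntegral.integral_sub (f := fun x => GD x - (a₁up - a₂up) * Dup x)
        (g := fun x => (a₁down - a₂down) * Ddown x)
        (((cg.mul (cDup.add cDdown)).intervalIntegrable _ _).sub
          ((continuous_const.mul cDup).intervalIntegrable _ _))
        ((continuous_const.mul cDdown).intervalIntegrable _ _),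
      intervalIntegral.integral_sub (f := GD) (g := fun x => (a₁up - a₂up) * Dup x)
        ((cg.mul (cDup.add cDdown)).intervalIntegrable _ _)
        ((continuous_const.mul cDup).intervalIntegrable _ _),
      intervalIntegral.integral_const_mul, intervalIntegral.integral_const_mul,
      intDup, intDdown]
    have : (∫ k in (-(1/2 : ℝ))..(1/2 : ℝ), GD k) = 0 := intGD
    rw [this]; ring
  have hQnn : ∀ k : ℝ, 0 ≤ Q k := fun k =>
    add_nonneg (qterm_nonneg _ _) (qterm_nonneg _ _)
  -- Q vanishes on [-1/2, 1/2]
  have hQzero : ∀ k ∈ Set.Icc (-(1/2 : ℝ)) (1/2 : ℝ), Q k = 0 := by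
    intro k hk
    by_contra hne
    have hpos : 0 < Q k := lt_of_le_of_ne (hQnn k) (Ne.symm hne)
    have : (∫ x in (-(1/2 : ℝ))..(1/2 : ℝ), (0:ℝ)) < ∫ x in (-(1/2 : ℝ))..(1/2 : ℝ), Q x := by
      apply intervalIntegral.integral_lt_integral_of_continuousOn_of_le_of_exists_lt
        (by norm_num) continuousOn_const cQ.continuousOn
        (fun x _ => hQnn x) ⟨k, hk, hpos⟩
    rw [intervalIntegral.integral_zero, intQ] at this
    exact lt_irrefl 0 this
  -- conclude pointwise equalities on [-1/2,1/2]
  have hkey : ∀ k ∈ Set.Icc (-(1/2 : ℝ)) (1/2 : ℝ),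
      f₁ k - a₁up = f₂ k - a₂up ∧ f₁ k - a₁down = f₂ k - a₂down := by
    intro k hk
    have h0 := hQzero k hk
    have n1 := qterm_nonneg (f₁ k - a₁up) (f₂ k - a₂up)
    have n2 := qterm_nonneg (f₁ k - a₁down) (f₂ k - a₂down)
    simp only [hQ] at h0
    constructor
    · exact qterm_eq_zero (by linarith)
    · exact qterm_eq_zero (by linarith)
  -- f₁(1/4) = f₂(1/4) = 0
  have hq₁ : f₁ (1/4 : ℝ) = 0 := by
    have := hsym₁ (1/4 : ℝ); norm_num at this; linarith
  have hq₂ : f₂ (1/4 : ℝ) = 0 := by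
    have := hsym₂ (1/4 : ℝ); norm_num at this; linarith
  have hmem : (1/4 : ℝ) ∈ Set.Icc (-(1/2 : ℝ)) (1/2 : ℝ) := by norm_num
  obtain ⟨e1, e2⟩ := hkey _ hmem
  have haup : a₁up = a₂up := by rw [hq₁, hq₂] at e1; linarith
  have hadown : a₁down = a₂down := by rw [hq₁, hq₂] at e2; linarith
  refine ⟨?_, haup, hadown⟩
  funext k
  have hmem' : k - (round k : ℤ) ∈ Set.Icc (-(1/2 : ℝ)) (1/2 : ℝ) := by
    have := abs_sub_round k
    rw [abs_le] at this
    constructor <;> [linarith [this.1]; linarith [this.2]]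
  obtain ⟨e1', _⟩ := hkey _ hmem'
  have p1 : f₁ (k - (round k : ℤ)) = f₁ k := by
    have := hper₁.sub_int_mul_eq (x := k) (round k)
    simpa using this
  have p2 : f₂ (k - (round k : ℤ)) = f₂ k := by
    have := hper₂.sub_int_mul_eq (x := k) (round k)
    simpa using this
  rw [p1, p2, haup] at e1'
  linarith
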